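/- If X is a compact Hausdorff space such that every perfect subset of X has the NTIP, then X has the CSWP. -/

import Mathlib

open Classical Set

/-- `χ_H ∈ A`. -/
noncomputable def chiMem {X : Type*} [TopologicalSpace X]
    (A : Subalgebra ℂ C(X, ℂ)) (H : Set X) : Prop :=
  ∃ g ∈ A, ∀ x, g x = if x ∈ H then (1 : ℂ) else 0

/-- The non-trivial idempotent property. -/
noncomputable def NTIP (X : Type*) [TopologicalSpace X] : Prop :=
  ∀ A : Subalgebra ℂ C(X, ℂ), IsClosed (A : Set C(X, ℂ)) → A.SeparatesPoints →
    ∃ H : Set X, IsClopen H ∧ H.Nonempty ∧ H ≠ Set.univ ∧ chiMem A H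

/-- The Complex Stone–Weierstrass Property. -/
def CSWP (X : Type*) [TopologicalSpace X] : Prop :=
  ∀ A : Subalgebra ℂ C(X, ℂ), A.SeparatesPoints → Dense (A : Set C(X, ℂ))

section KunenAux

set_option linter.unusedSectionVars false
set_option maxHeartbeats 1000000


/-- The characteristic function of a clopen set, as a continuous map. -/
noncomputable def chiC {X : Type*} [TopologicalSpace X] (H : Set X) (hH : IsClopen H) : C(X, ℂ) :=
  ⟨fun x => if x ∈ H then (1 : ℂ) else 0, by
    have h1 : (fun x => if x ∈ H then (1 : ℂ) else 0) = H.piecewise (fun _ => (1:ℂ)) (fun _ => 0) := by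
      ext x; by_cases hx : x ∈ H <;> simp [Set.piecewise, hx]
    rw [h1]
    refine continuous_const.piecewise ?_ continuous_const
    intro a ha
    rw [hH.frontier_eq] at ha
    exact absurd ha (Set.notMem_empty a)⟩

@[simp] lemma chiC_apply {X : Type*} [TopologicalSpace X] (H : Set X) (hH : IsClopen H) (x : X) :
    chiC H hH x = if x ∈ H then (1 : ℂ) else 0 := rfl

/-- The cubic `z ↦ z²(3-2z)` used to iterate towards idempotents. -/
noncomputable def qq (z : ℂ) : ℂ := z * z * (3 - 2 * z)

lemma qq_one_sub (z : ℂ) : qq (1 - z) = 1 - qq z := by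
  simp only [qq]; ring

lemma qq_contract0 {z : ℂ} (h : ‖z‖ ≤ 1/4) : ‖qq z‖ ≤ 7/8 * ‖z‖ := by
  have h3 : ‖(3 : ℂ) - 2 * z‖ ≤ 7/2 := by
    calc ‖(3:ℂ) - 2*z‖ ≤ ‖(3:ℂ)‖ + ‖2*z‖ := norm_sub_le _ _
    _ ≤ 3 + 2 * (1/4) := by
        refine add_le_add ?_ ?_
        · simp [Complex.norm_ofNat]  -- may need adjust
        · rw [norm_mul]; simp only [Complex.norm_ofNat]
          nlinarith [norm_nonneg z]
    _ ≤ 7/2 := by norm_num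
  calc ‖qq z‖ = ‖z‖ * ‖z‖ * ‖(3:ℂ) - 2*z‖ := by rw [qq, norm_mul, norm_mul]
  _ ≤ ‖z‖ * (1/4) * (7/2) := by
      refine mul_le_mul (mul_le_mul le_rfl h (norm_nonneg _) (norm_nonneg _)) h3 (norm_nonneg _) ?_
      positivity
  _ = 7/8 * ‖z‖ := by ring

lemma qq_contract {c z : ℂ} (hc : c = 0 ∨ c = 1) (h : ‖z - c‖ ≤ 1/4) :
    ‖qq z - c‖ ≤ 7/8 * ‖z - c‖ := by
  rcases hc with rfl | rfl
  · simpa using qq_contract0 (by simpa using h)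
  · have h' : ‖(1 : ℂ) - z‖ ≤ 1/4 := by rwa [norm_sub_rev] at h
    have := qq_contract0 h'
    rw [qq_one_sub] at this
    calc ‖qq z - 1‖ = ‖(1:ℂ) - qq z‖ := (norm_sub_rev _ _)
    _ ≤ 7/8 * ‖(1:ℂ) - z‖ := this
    _ = 7/8 * ‖z - 1‖ := by rw [norm_sub_rev]

lemma qq_iter_est {c : ℂ} (hc : c = 0 ∨ c = 1) :
    ∀ (n : ℕ) {z : ℂ}, ‖z - c‖ ≤ 1/4 → ‖qq^[n] z - c‖ ≤ (7/8)^n * ‖z - c‖ := by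
  intro n
  induction n with
  | zero => intro z h; simp
  | succ n ih =>
    intro z h
    rw [Function.iterate_succ_apply]
    have h1 : ‖qq z - c‖ ≤ 7/8 * ‖z - c‖ := qq_contract hc h
    have h2 : ‖qq z - c‖ ≤ 1/4 := le_trans h1 (by nlinarith [norm_nonneg (z - c)])
    calc ‖qq^[n] (qq z) - c‖ ≤ (7/8)^n * ‖qq z - c‖ := ih h2
    _ ≤ (7/8)^n * (7/8 * ‖z - c‖) := by
        refine mul_le_mul_of_nonneg_left h1 (by positivity)
    _ = (7/8)^(n+1) * ‖z - c‖ := by ring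


section QC
variable {X : Type*} [TopologicalSpace X]

/-- The idempotent-iteration map on continuous functions. -/
noncomputable def QC (f : C(X, ℂ)) : C(X, ℂ) :=
  f * f * (ContinuousMap.const X (3:ℂ) - ContinuousMap.const X (2:ℂ) * f)

lemma QC_apply (f : C(X, ℂ)) (x : X) : QC f x = qq (f x) := by
  simp [QC, qq]

lemma QC_iter_apply (n : ℕ) (f : C(X, ℂ)) (x : X) : (QC^[n] f) x = qq^[n] (f x) := by
  induction n generalizing f with
  | zero => rfl
  | succ n ih =>
    rw [Function.iterate_succ_apply, Function.iterate_succ_apply, ih, QC_apply]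

lemma const_mem (A : Subalgebra ℂ C(X, ℂ)) (c : ℂ) : ContinuousMap.const X c ∈ A := by
  have : ContinuousMap.const X c = c • (1 : C(X, ℂ)) := by
    ext x; simp
  rw [this]; exact A.smul_mem (one_mem A) c

lemma QC_mem (A : Subalgebra ℂ C(X, ℂ)) {f : C(X, ℂ)} (hf : f ∈ A) : QC f ∈ A := by
  exact A.mul_mem (A.mul_mem hf hf)
    (A.sub_mem (const_mem A 3) (A.mul_mem (const_mem A 2) hf))

lemma QC_iter_mem (A : Subalgebra ℂ C(X, ℂ)) {f : C(X, ℂ)} (hf : f ∈ A) (n : ℕ) :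
    QC^[n] f ∈ A := by
  induction n with
  | zero => exact hf
  | succ n ih => rw [Function.iterate_succ_apply']; exact QC_mem A ih

end QC


lemma pow78 {ε : ℝ} (hε : 0 < ε) : ∃ n : ℕ, (7/8 : ℝ)^n * (1/4) ≤ ε := by
  obtain ⟨n, hn⟩ := exists_pow_lt_of_lt_one hε (by norm_num : (7/8 : ℝ) < 1)
  exact ⟨n, by nlinarith [pow_nonneg (by norm_num : (0:ℝ) ≤ 7/8) n]⟩

section Machine
variable {X : Type*} [TopologicalSpace X] [CompactSpace X] [T2Space X]

def ApproxOne (A : Subalgebra ℂ C(X, ℂ)) (K W : Set X) : Prop :=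
  ∀ ε : ℝ, 0 < ε → ∃ a ∈ A, (∀ w ∈ W, ‖a w - 1‖ ≤ ε) ∧ (∀ w ∈ K \ W, ‖a w‖ ≤ ε)

def IdemFree (A : Subalgebra ℂ C(X, ℂ)) (K : Set X) : Prop :=
  ¬ ∃ W : Set X, W ⊆ K ∧ W.Nonempty ∧ (K \ W).Nonempty ∧ IsClosed W ∧ IsClosed (K \ W) ∧
      ApproxOne A K W

lemma split_of_approx (A : Subalgebra ℂ C(X, ℂ)) {K L W : Set X} (hKcl : IsClosed K)
    (hLK : L ⊆ K) (hWL : W ⊆ L) (hWne : W.Nonempty) (hLWne : (L \ W).Nonempty)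
    {a : C(X, ℂ)} (ha : a ∈ A)
    (haW : ∀ w ∈ W, ‖a w - 1‖ ≤ 1/5) (haLW : ∀ w ∈ L \ W, ‖a w‖ ≤ 1/5)
    (hKU : ∀ w ∈ K, ‖a w‖ < 1/4 ∨ ‖a w - 1‖ < 1/4) :
    ¬ IdemFree A K := by
  intro hfree
  apply hfree
  have hnorm1 : ∀ z : ℂ, 1 ≤ ‖z‖ + ‖z - 1‖ := by
    intro z
    have h2 : ‖z - (z-1)‖ ≤ ‖z‖ + ‖z - 1‖ := norm_sub_le _ _
    have h3 : ‖z - (z-1)‖ = 1 := by norm_num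
    linarith
  set W' := {x ∈ K | 1/4 ≤ ‖a x‖} with hW'
  have hcompl : K \ W' = {x ∈ K | 1/4 ≤ ‖a x - 1‖} := by
    ext x
    constructor
    · rintro ⟨hxK, hxW⟩
      refine ⟨hxK, ?_⟩
      have hlt : ‖a x‖ < 1/4 := by
        by_contra hge; exact hxW ⟨hxK, le_of_not_gt hge⟩
      linarith [hnorm1 (a x)]
    · rintro ⟨hxK, hx1⟩
      refine ⟨hxK, ?_⟩
      rintro ⟨-, hge⟩
      rcases hKU x hxK with h | h
      · linarith
      · linarith
  have hWsub : ∀ w ∈ W, w ∈ W' := by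
    intro w hw
    refine ⟨hLK (hWL hw), ?_⟩
    linarith [hnorm1 (a w), haW w hw]
  have hWsub' : ∀ w ∈ L \ W, w ∈ K \ W' := by
    intro w hw
    refine ⟨hLK hw.1, ?_⟩
    rintro ⟨-, hge⟩
    linarith [haLW w hw]
  refine ⟨W', fun x hx => hx.1, ?_, ?_, ?_, ?_, ?_⟩
  · obtain ⟨w, hw⟩ := hWne; exact ⟨w, hWsub w hw⟩
  · obtain ⟨w, hw⟩ := hLWne; exact ⟨w, hWsub' w hw⟩
  · exact hKcl.inter (isClosed_le continuous_const (a.continuous.norm))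
  · rw [hcompl]
    exact hKcl.inter (isClosed_le continuous_const ((a - 1).continuous.norm))
  · intro ε hε
    obtain ⟨n, hn⟩ := pow78 hε
    refine ⟨QC^[n] a, QC_iter_mem A ha n, ?_, ?_⟩
    · rintro w ⟨hwK, hge⟩
      have h1 : ‖a w - 1‖ < 1/4 := by
        rcases hKU w hwK with h | h
        · linarith
        · exact h
      rw [QC_iter_apply]
      calc ‖qq^[n] (a w) - 1‖ ≤ (7/8)^n * ‖a w - 1‖ := qq_iter_est (Or.inr rfl) n h1.le
      _ ≤ (7/8)^n * (1/4) := by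
          refine mul_le_mul_of_nonneg_left h1.le (by positivity)
      _ ≤ ε := hn
    · intro w hw
      rw [hcompl] at hw
      have h0 : ‖a w‖ < 1/4 := by
        rcases hKU w hw.1 with h | h
        · exact h
        · linarith [hw.2]
      rw [QC_iter_apply]
      have := qq_iter_est (Or.inl rfl) n (z := a w) (by simpa using h0.le)
      simp only [sub_zero] at this
      calc ‖qq^[n] (a w)‖ ≤ (7/8)^n * ‖a w‖ := this
      _ ≤ (7/8)^n * (1/4) := mul_le_mul_of_nonneg_left h0.le (by positivity)
      _ ≤ ε := hn

/-- IdemFree passes to intersections of chains of closed sets. -/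
lemma idemFree_sInter (A : Subalgebra ℂ C(X, ℂ)) {c : Set (Set X)}
    (hchain : IsChain (· ⊆ ·) c) (hne : c.Nonempty)
    (hcl : ∀ K ∈ c, IsClosed K) (hfree : ∀ K ∈ c, IdemFree A K) :
    IdemFree A (⋂₀ c) := by
  rintro ⟨W, hWsub, hWne, hLWne, hWcl, hLWcl, happ⟩
  obtain ⟨a, ha, haW, haLW⟩ := happ (1/5) (by norm_num)
  set U := {w : X | ‖a w‖ < 1/4} ∪ {w : X | ‖a w - 1‖ < 1/4} with hU
  have hUopen : IsOpen U :=
    (isOpen_lt a.continuous.norm continuous_const).union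
      (isOpen_lt (a - 1).continuous.norm continuous_const)
  have hLU : ⋂₀ c ⊆ U := by
    intro w hw
    by_cases hwW : w ∈ W
    · exact Or.inr (by simpa using lt_of_le_of_lt (haW w hwW) (by norm_num))
    · exact Or.inl (by simpa using lt_of_le_of_lt (haLW w ⟨hw, hwW⟩) (by norm_num))
  have hKU : ∃ K ∈ c, K ⊆ U := by
    by_contra hcon
    push_neg at hcon
    haveI : Nonempty ↥c := hne.to_subtype
    have hnonempty : ∀ i : ↥c, ((i : Set X) \ U).Nonempty := by
      intro i
      obtain ⟨x, hx, hxU⟩ := Set.not_subset.mp (hcon i i.2)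
      exact ⟨x, hx, hxU⟩
    have hdir : Directed (· ⊇ ·) (fun i : ↥c => (i : Set X) \ U) := by
      intro i j
      rcases hchain.total i.2 j.2 with h | h
      · exact ⟨i, Set.diff_subset_diff_left (le_refl _), Set.diff_subset_diff_left h⟩
      · exact ⟨j, Set.diff_subset_diff_left h, Set.diff_subset_diff_left (le_refl _)⟩
    have hclosed : ∀ i : ↥c, IsClosed ((i : Set X) \ U) := by
      intro i
      rw [Set.diff_eq]
      exact (hcl _ i.2).inter hUopen.isClosed_compl
    obtain ⟨x, hx⟩ := IsCompact.nonempty_iInter_of_directed_nonempty_isCompact_isClosed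
      (fun i : ↥c => (i : Set X) \ U) hdir hnonempty
      (fun i => (hclosed i).isCompact) hclosed
    simp only [Set.mem_iInter] at hx
    have hxL : x ∈ ⋂₀ c := by
      intro K hK
      exact (hx ⟨K, hK⟩).1
    exact (hx ⟨hne.some, hne.some_mem⟩).2 (hLU hxL)
  obtain ⟨K, hKc, hKsub⟩ := hKU
  exact split_of_approx A (hcl K hKc) (Set.sInter_subset_of_mem hKc) hWsub hWne hLWne ha
    haW haLW (fun w hw => hKsub hw) (hfree K hKc)

/-- If `M` is perfect (nonempty, with at least 2 points) and has the NTIP, then the closure of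
`A` restricted to `M` has a nontrivial idempotent, contradicting IdemFree. -/
lemma perfect_not_idemFree (A : Subalgebra ℂ C(X, ℂ))
    (hAsep : ∀ x y : X, x ≠ y → ∃ f ∈ A, f x ≠ f y)
    {M : Set X} (hMcl : IsClosed M) (hNTIP : NTIP M) :
    ¬ IdemFree A M := by
  intro hfree
  haveI : CompactSpace ↥M := isCompact_iff_compactSpace.mp hMcl.isCompact
  set ρ : C(X, ℂ) →ₐ[ℂ] C(↥M, ℂ) :=
    ContinuousMap.compRightAlgHom ℂ ℂ ⟨Subtype.val, continuous_subtype_val⟩ with hρ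
  set B : Subalgebra ℂ C(↥M, ℂ) := (A.map ρ).topologicalClosure with hB
  have hBclosed : IsClosed (B : Set C(↥M, ℂ)) := (A.map ρ).isClosed_topologicalClosure
  have hBsep : B.SeparatesPoints := by
    intro u v huv
    obtain ⟨f, hf, hne⟩ := hAsep u.val v.val (fun hh => huv (Subtype.ext hh))
    refine ⟨(ρ f : C(↥M, ℂ)), ⟨ρ f, ?_, rfl⟩, hne⟩
    exact (A.map ρ).le_topologicalClosure ⟨f, hf, rfl⟩
  obtain ⟨H, hHclopen, hHne, hHne_univ, g, hgB, hgval⟩ := hNTIP B hBclosed hBsep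
  apply hfree
  have hval_inj : Function.Injective (Subtype.val : ↥M → X) := Subtype.coe_injective
  set W : Set X := Subtype.val '' H with hW
  have hWM : W ⊆ M := by rintro x ⟨u, hu, rfl⟩; exact u.2
  have hMWeq : M \ W = Subtype.val '' Hᶜ := by
    ext x
    constructor
    · rintro ⟨hxM, hxW⟩
      exact ⟨⟨x, hxM⟩, fun hmem => hxW ⟨⟨x, hxM⟩, hmem, rfl⟩, rfl⟩
    · rintro ⟨u, hu, rfl⟩
      refine ⟨u.2, ?_⟩
      rintro ⟨v, hv, hvu⟩
      exact hu (hval_inj hvu ▸ hv)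
  refine ⟨W, hWM, hHne.image _, ?_, ?_, ?_, ?_⟩
  · rw [hMWeq]
    obtain ⟨u, hu⟩ : Hᶜ.Nonempty := by
      rcases Set.ne_univ_iff_exists_notMem H |>.mp hHne_univ with ⟨u, hu⟩
      exact ⟨u, hu⟩
    exact ⟨u.val, u, hu, rfl⟩
  · exact ((hHclopen.1.isCompact).image continuous_subtype_val).isClosed
  · rw [hMWeq]
    exact ((hHclopen.2.isClosed_compl.isCompact).image continuous_subtype_val).isClosed
  · intro ε hε
    have hg_closure : g ∈ closure ((A.map ρ : Subalgebra ℂ C(↥M, ℂ)) : Set C(↥M, ℂ)) := by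
      rw [← Subalgebra.topologicalClosure_coe]; exact hgB
    obtain ⟨b, hb, hdist⟩ := Metric.mem_closure_iff.mp hg_closure ε hε
    obtain ⟨f, hf, rfl⟩ := hb
    refine ⟨f, hf, ?_, ?_⟩
    · rintro w ⟨u, hu, rfl⟩
      have h1 : g u = 1 := by rw [hgval u, if_pos hu]
      have := ContinuousMap.dist_apply_le_dist (f := ρ f) (g := g) u
      rw [dist_comm] at hdist
      have h2 : dist ((ρ f) u) (g u) ≤ ε := le_trans this hdist.le
      rw [h1] at h2
      exact (by simpa [dist_eq_norm] using h2 : ‖(ρ f) u - 1‖ ≤ ε)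
    · intro w hw
      rw [hMWeq] at hw
      obtain ⟨u, hu, rfl⟩ := hw
      have h1 : g u = 0 := by rw [hgval u, if_neg hu]
      have := ContinuousMap.dist_apply_le_dist (f := ρ f) (g := g) u
      rw [dist_comm] at hdist
      have h2 : dist ((ρ f) u) (g u) ≤ ε := le_trans this hdist.le
      rw [h1] at h2
      exact (by simpa [dist_eq_norm] using h2 : ‖(ρ f) u‖ ≤ ε)

lemma machine (A : Subalgebra ℂ C(X, ℂ))
    (hAsep : ∀ x y : X, x ≠ y → ∃ f ∈ A, f x ≠ f y)
    (hNTIP : ∀ P : Set X, Perfect P → P.Nonempty → NTIP P)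
    {T : Set X} (hT : IsClosed T) {x y : X} (hx : x ∈ T) (hy : y ∈ T) (hxy : x ≠ y)
    (hfree : IdemFree A T) : False := by
  set C5 : Set (Set X) := {K | IsClosed K ∧ K ⊆ T ∧
      (∀ f ∈ A, ∃ p ∈ K, ∀ q ∈ T, ‖f q‖ ≤ ‖f p‖) ∧ IdemFree A K} with hC5
  have hTmem : T ∈ C5 := by
    refine ⟨hT, le_refl _, ?_, hfree⟩
    intro f hf
    obtain ⟨p, hp, hmax⟩ := hT.isCompact.exists_isMaxOn ⟨x, hx⟩
      ((f.continuous.norm).continuousOn)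
    exact ⟨p, hp, fun q hq => hmax hq⟩
  have hzorn : ∃ M, M ⊆ T ∧ Minimal (· ∈ C5) M := by
    refine zorn_superset_nonempty C5 ?_ T hTmem
    intro c hsub hchain hcne
    refine ⟨⋂₀ c, ⟨?_, ?_, ?_, ?_⟩, fun K hK => Set.sInter_subset_of_mem hK⟩
    · exact isClosed_sInter (fun K hK => (hsub hK).1)
    · exact Set.Subset.trans (Set.sInter_subset_of_mem hcne.some_mem) (hsub hcne.some_mem).2.1
    · intro f hf
      haveI : Nonempty ↥c := hcne.to_subtype
      set t : ↥c → Set X := fun i => {p ∈ (i : Set X) | ∀ q ∈ T, ‖f q‖ ≤ ‖f p‖} with ht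
      have hforall : ∀ i : ↥c, IsClosed {p : X | ∀ q ∈ T, ‖f q‖ ≤ ‖f p‖} := by
        intro i
        have : {p : X | ∀ q ∈ T, ‖f q‖ ≤ ‖f p‖} = ⋂ q ∈ T, {p | ‖f q‖ ≤ ‖f p‖} := by
          ext p; simp
        rw [this]
        exact isClosed_biInter (fun q _ => isClosed_le continuous_const f.continuous.norm)
      have htcl : ∀ i : ↥c, IsClosed (t i) := fun i => ((hsub i.2).1).inter (hforall i)
      have htne : ∀ i : ↥c, (t i).Nonempty := by
        intro i
        obtain ⟨p, hp, hmax⟩ := (hsub i.2).2.2.1 f hf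
        exact ⟨p, hp, hmax⟩
      have htdir : Directed (· ⊇ ·) t := by
        intro i j
        rcases hchain.total i.2 j.2 with h | h
        · exact ⟨i, le_refl _, fun p hp => ⟨h hp.1, hp.2⟩⟩
        · exact ⟨j, fun p hp => ⟨h hp.1, hp.2⟩, le_refl _⟩
      obtain ⟨p, hp⟩ := IsCompact.nonempty_iInter_of_directed_nonempty_isCompact_isClosed
        t htdir htne (fun i => (htcl i).isCompact) htcl
      simp only [Set.mem_iInter] at hp
      refine ⟨p, ?_, (hp ⟨hcne.some, hcne.some_mem⟩).2⟩
      intro K hK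
      exact (hp ⟨K, hK⟩).1
    · exact idemFree_sInter A hchain hcne (fun K hK => (hsub hK).1)
        (fun K hK => (hsub hK).2.2.2)
  obtain ⟨M, hMT, hMmin⟩ := hzorn
  have hMmem : M ∈ C5 := hMmin.1
  obtain ⟨hMcl, hMsubT, hMnorm, hMfree⟩ := hMmem
  have hMne : M.Nonempty := by
    obtain ⟨p, hp, -⟩ := hMnorm 1 (one_mem A)
    exact ⟨p, hp⟩
  -- M has at least two points
  have htwo : ∃ u ∈ M, ∃ v ∈ M, u ≠ v := by
    by_contra hcon
    push_neg at hcon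
    obtain ⟨p, hp⟩ := hMne
    have hsing : ∀ u ∈ M, u = p := fun u hu => hcon u hu p hp
    obtain ⟨f, hf, hfxy⟩ := hAsep x y hxy
    set g : C(X, ℂ) := f - ContinuousMap.const X (f p) with hg
    have hgA : g ∈ A := A.sub_mem hf (const_mem A (f p))
    obtain ⟨p', hp', hmax⟩ := hMnorm g hgA
    have hp'p : p' = p := hsing p' hp'
    have hgz : ∀ q ∈ T, g q = 0 := by
      intro q hq
      have := hmax q hq
      rw [hp'p] at this
      have hgp : g p = 0 := by simp [hg]
      rw [hgp] at this
      have hle : ‖g q‖ ≤ 0 := by simpa using this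
      have := le_antisymm hle (norm_nonneg _)
      exact norm_eq_zero.mp this
    have h1 := hgz x hx
    have h2 := hgz y hy
    simp only [hg, ContinuousMap.sub_apply, ContinuousMap.const_apply, sub_eq_zero] at h1 h2
    exact hfxy (h1.trans h2.symm)
  by_cases hPerf : ∀ z ∈ M, AccPt z (Filter.principal M)
  · exact perfect_not_idemFree A hAsep hMcl (hNTIP M ⟨hMcl, hPerf⟩ hMne) hMfree
  push_neg at hPerf
  obtain ⟨z, hzM, hzacc⟩ := hPerf
  -- z is an isolated point of M
  rw [accPt_iff_nhds] at hzacc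
  push_neg at hzacc
  obtain ⟨U, hU, hUz⟩ := hzacc
  obtain ⟨V, hVU, hVopen, hzV⟩ := mem_nhds_iff.mp hU
  set N : Set X := M \ {z} with hN
  have hNV : N = M \ V := by
    ext u
    constructor
    · rintro ⟨huM, huz⟩
      refine ⟨huM, fun huV => ?_⟩
      exact huz (hUz u ⟨hVU huV, huM⟩)
    · rintro ⟨huM, huV⟩
      exact ⟨huM, fun hu => huV (by rw [Set.mem_singleton_iff] at hu; rw [hu]; exact hzV)⟩
  have hNcl : IsClosed N := by
    rw [hNV, Set.diff_eq]
    exact hMcl.inter hVopen.isClosed_compl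
  have hNne : N.Nonempty := by
    obtain ⟨u, hu, v, hv, huv⟩ := htwo
    by_cases huz : u = z
    · exact ⟨v, hv, fun hvz => huv (by rw [Set.mem_singleton_iff] at hvz; rw [huz, hvz])⟩
    · exact ⟨u, hu, huz⟩
  -- the key norm inequality at z
  have hstar : ∀ f ∈ A, ∃ p ∈ N, ‖f z‖ ≤ ‖f p‖ := by
    intro f hf
    by_contra hcon
    push_neg at hcon
    obtain ⟨p₀, hp₀, hmax⟩ := hNcl.isCompact.exists_isMaxOn hNne
      ((f.continuous.norm).continuousOn)
    have hlt : ‖f p₀‖ < ‖f z‖ := hcon p₀ hp₀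
    have hfz : f z ≠ 0 := by
      intro h0
      rw [h0] at hlt
      simp only [norm_zero] at hlt
      exact absurd hlt (not_lt.mpr (norm_nonneg _))
    set g : C(X, ℂ) := (f z)⁻¹ • f with hg
    have hgA : g ∈ A := A.smul_mem hf _
    have hgz : g z = 1 := by
      simp only [hg, ContinuousMap.smul_apply, smul_eq_mul]
      exact inv_mul_cancel₀ hfz
    set cc : ℝ := ‖f p₀‖ / ‖f z‖ with hcc
    have hcc1 : cc < 1 := by
      rw [hcc, div_lt_one (lt_of_le_of_lt (norm_nonneg _) hlt)]
      exact hlt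
    have hcc0 : 0 ≤ cc := div_nonneg (norm_nonneg _) (norm_nonneg _)
    have hgN : ∀ p ∈ N, ‖g p‖ ≤ cc := by
      intro p hp
      have h1 : ‖g p‖ = ‖f p‖ / ‖f z‖ := by
        simp only [hg, ContinuousMap.smul_apply, smul_eq_mul, norm_mul, norm_inv]
        rw [div_eq_inv_mul]
      rw [h1, hcc]
      exact (div_le_div_iff_of_pos_right (lt_of_le_of_lt (norm_nonneg _) hlt)).mpr (hmax hp)
    refine hMfree ⟨{z}, Set.singleton_subset_iff.mpr hzM, Set.singleton_nonempty z,
      (by rwa [← hN] : (M \ {z}).Nonempty), isClosed_singleton, (by rwa [← hN]), ?_⟩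
    intro ε hε
    obtain ⟨k, hk⟩ := exists_pow_lt_of_lt_one hε hcc1
    refine ⟨g ^ k, pow_mem hgA k, ?_, ?_⟩
    · intro w hw
      rw [Set.mem_singleton_iff] at hw
      subst hw
      have : (g ^ k) w = (g w) ^ k := by simp
      rw [this, hgz, one_pow]
      simp [le_of_lt hε]
    · intro w hw
      have hwN : w ∈ N := by rwa [hN]
      have : (g ^ k) w = (g w) ^ k := by simp
      rw [this, norm_pow]
      calc ‖g w‖ ^ k ≤ cc ^ k := pow_le_pow_left₀ (norm_nonneg _) (hgN w hwN) k
      _ ≤ ε := hk.le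
  -- N ∈ C5
  have hNmem : N ∈ C5 := by
    refine ⟨hNcl, Set.Subset.trans Set.diff_subset hMsubT, ?_, ?_⟩
    · intro f hf
      obtain ⟨p, hp, hmax⟩ := hMnorm f hf
      by_cases hpz : p = z
      · obtain ⟨p', hp', hle⟩ := hstar f hf
        subst hpz
        exact ⟨p', hp', fun q hq => le_trans (hmax q hq) hle⟩
      · exact ⟨p, ⟨hp, hpz⟩, hmax⟩
    · -- IdemFree A N
      rintro ⟨W, hWN, hWne, hNWne, hWcl, hNWcl, happ⟩
      have hWM : W ⊆ M := Set.Subset.trans hWN Set.diff_subset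
      have hzW : z ∉ W := fun hzW => (hWN hzW).2 rfl
      have hMWsplit : M \ W = (N \ W) ∪ {z} := by
        ext u
        constructor
        · rintro ⟨huM, huW⟩
          by_cases huz : u = z
          · exact Or.inr huz
          · exact Or.inl ⟨⟨huM, huz⟩, huW⟩
        · rintro (⟨⟨huM, huz⟩, huW⟩ | huz)
          · exact ⟨huM, huW⟩
          · rw [Set.mem_singleton_iff] at huz
            subst huz
            exact ⟨hzM, hzW⟩
      have hget : ∀ n : ℕ, ∃ a ∈ A, (∀ w ∈ W, ‖a w - 1‖ ≤ 1/((n:ℝ)+1)) ∧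
          (∀ w ∈ N \ W, ‖a w‖ ≤ 1/((n:ℝ)+1)) := fun n => happ (1/((n:ℝ)+1)) (by positivity)
      choose aseq haA haW haNW using hget
      set v : ℕ → ℂ := fun n => aseq n z with hv
      have hvdiff : ∀ n m : ℕ, ‖v n - v m‖ ≤ 1/((n:ℝ)+1) + 1/((m:ℝ)+1) := by
        intro n m
        obtain ⟨p, hp, hle⟩ := hstar (aseq n - aseq m) (A.sub_mem (haA n) (haA m))
        have h1 : (aseq n - aseq m) z = v n - v m := by simp [hv]
        rw [h1] at hle
        refine le_trans hle ?_
        have h2 : (aseq n - aseq m) p = aseq n p - aseq m p := by simp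
        rw [h2]
        by_cases hpW : p ∈ W
        · have e1 : aseq n p - aseq m p = (aseq n p - 1) - (aseq m p - 1) := by ring
          rw [e1]
          exact le_trans (norm_sub_le _ _) (add_le_add (haW n p hpW) (haW m p hpW))
        · exact le_trans (norm_sub_le _ _)
            (add_le_add (haNW n p ⟨hp, hpW⟩) (haNW m p ⟨hp, hpW⟩))
      have hvcauchy : CauchySeq v := by
        refine cauchySeq_of_le_tendsto_0 (fun N₀ : ℕ => 2/((N₀:ℝ)+1)) ?_ ?_
        · intro n m N₀ hn hm
          rw [dist_eq_norm]
          show ‖v n - v m‖ ≤ 2 / ((N₀:ℝ) + 1)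
          rw [show (2:ℝ)/((N₀:ℝ)+1) = 1/((N₀:ℝ)+1) + 1/((N₀:ℝ)+1) by ring]
          refine le_trans (hvdiff n m) ?_
          have e1 : (1:ℝ)/((n:ℝ)+1) ≤ 1/((N₀:ℝ)+1) :=
            one_div_le_one_div_of_le (by positivity)
              (add_le_add_left (Nat.cast_le.mpr hn) 1)
          have e2 : (1:ℝ)/((m:ℝ)+1) ≤ 1/((N₀:ℝ)+1) :=
            one_div_le_one_div_of_le (by positivity)
              (add_le_add_left (Nat.cast_le.mpr hm) 1)
          linarith
        · have h0 := tendsto_one_div_add_atTop_nhds_zero_nat (𝕜 := ℝ)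
          have := h0.const_mul (2:ℝ)
          simpa only [mul_one_div, mul_zero] using this
      obtain ⟨lam, hlam⟩ := cauchySeq_tendsto_of_complete hvcauchy
      have hvev : ∀ ε : ℝ, 0 < ε → ∃ n : ℕ, ‖v n - lam‖ ≤ ε ∧ 1/((n:ℝ)+1) ≤ ε := by
        intro ε hε
        obtain ⟨N₁, hN₁⟩ := Metric.tendsto_atTop.mp hlam ε hε
        obtain ⟨K, hK⟩ := exists_nat_one_div_lt hε
        refine ⟨max N₁ K, ?_, ?_⟩
        · have := hN₁ (max N₁ K) (le_max_left _ _)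
          rw [dist_eq_norm] at this
          exact this.le
        · refine le_trans ?_ hK.le
          exact one_div_le_one_div_of_le (by positivity)
            (add_le_add_left (Nat.cast_le.mpr (le_max_right N₁ K)) 1)
      by_cases hl0 : lam = 0
      · subst hl0
        refine hMfree ⟨W, hWM, hWne, ?_, hWcl, ?_, ?_⟩
        · obtain ⟨w, hw⟩ := hNWne
          exact ⟨w, hw.1.1, hw.2⟩
        · rw [hMWsplit]
          exact hNWcl.union isClosed_singleton
        · intro ε hε
          obtain ⟨n, hn1, hn2⟩ := hvev ε hε
          rw [sub_zero] at hn1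
          refine ⟨aseq n, haA n, fun w hw => le_trans (haW n w hw) hn2, ?_⟩
          intro w hw
          rw [hMWsplit] at hw
          rcases hw with hw | hw
          · exact le_trans (haNW n w hw) hn2
          · rw [Set.mem_singleton_iff] at hw
            subst hw
            exact hn1
      by_cases hl1 : lam = 1
      · subst hl1
        refine hMfree ⟨W ∪ {z}, ?_, hWne.mono Set.subset_union_left, ?_, ?_, ?_, ?_⟩
        · exact Set.union_subset hWM (Set.singleton_subset_iff.mpr hzM)
        · obtain ⟨w, hw⟩ := hNWne
          refine ⟨w, hw.1.1, ?_⟩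
          rintro (hwW | hwz)
          · exact hw.2 hwW
          · exact hw.1.2 hwz
        · exact hWcl.union isClosed_singleton
        · have : M \ (W ∪ {z}) = N \ W := by
            ext u
            constructor
            · rintro ⟨huM, hun⟩
              simp only [Set.mem_union, Set.mem_singleton_iff, not_or] at hun
              exact ⟨⟨huM, fun h => hun.2 h⟩, hun.1⟩
            · rintro ⟨⟨huM, huz⟩, huW⟩
              refine ⟨huM, ?_⟩
              rintro (h | h)
              · exact huW h
              · exact huz h
          rw [this]
          exact hNWcl
        · intro ε hε
          obtain ⟨n, hn1, hn2⟩ := hvev ε hε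
          refine ⟨aseq n, haA n, ?_, ?_⟩
          · rintro w (hw | hw)
            · exact le_trans (haW n w hw) hn2
            · rw [Set.mem_singleton_iff] at hw
              subst hw
              exact hn1
          · intro w hw
            have : w ∈ N \ W := by
              rcases hw with ⟨huM, hun⟩
              simp only [Set.mem_union, Set.mem_singleton_iff, not_or] at hun
              exact ⟨⟨huM, fun h => hun.2 h⟩, hun.1⟩
            exact le_trans (haNW n w this) hn2
      · -- lam ∉ {0, 1}
        set μ : ℂ := lam * lam - lam with hμdef
        have hμ : μ ≠ 0 := by
          rw [hμdef]
          have : lam * lam - lam = lam * (lam - 1) := by ring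
          rw [this]
          exact mul_ne_zero hl0 (sub_ne_zero.mpr hl1)
        set cinv : ℂ := μ⁻¹ with hcinv
        set b : ℕ → C(X, ℂ) := fun n => cinv • (aseq n * aseq n - aseq n) with hb
        have hbA : ∀ n, b n ∈ A := fun n =>
          A.smul_mem (A.sub_mem (A.mul_mem (haA n) (haA n)) (haA n)) _
        have hbzval : ∀ n, b n z = cinv * (v n * v n - v n) := by
          intro n; simp [hb, hv]
        have htendz : Filter.Tendsto (fun n => b n z) Filter.atTop (nhds 1) := by
          have h1 : Filter.Tendsto (fun n => v n * v n - v n) Filter.atTop (nhds μ) :=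
            (hlam.mul hlam).sub hlam
          have h2 := h1.const_mul cinv
          rw [show cinv * μ = 1 from inv_mul_cancel₀ hμ] at h2
          simpa [hbzval] using h2
        have hbN : ∀ n, ∀ p ∈ N, ‖b n p‖ ≤ ‖cinv‖ * (2 * (1/((n:ℝ)+1))) := by
          intro n p hp
          have e1 : b n p = cinv * (aseq n p * (aseq n p - 1)) := by
            simp only [hb, ContinuousMap.smul_apply, ContinuousMap.sub_apply,
              ContinuousMap.mul_apply, smul_eq_mul]
            ring_nf
          rw [e1, norm_mul, norm_mul]
          refine mul_le_mul_of_nonneg_left ?_ (norm_nonneg _)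
          have hn1 : (0:ℝ) < 1/((n:ℝ)+1) := by positivity
          have hn2 : (1:ℝ)/((n:ℝ)+1) ≤ 1 := by
            rw [div_le_one (by positivity)]
            simp [Nat.cast_nonneg]
          by_cases hpW : p ∈ W
          · have b1 : ‖aseq n p - 1‖ ≤ 1/((n:ℝ)+1) := haW n p hpW
            have b2 : ‖aseq n p‖ ≤ 2 := by
              have : ‖aseq n p‖ ≤ ‖aseq n p - 1‖ + 1 := by
                calc ‖aseq n p‖ = ‖(aseq n p - 1) + 1‖ := by ring_nf
                _ ≤ ‖aseq n p - 1‖ + ‖(1:ℂ)‖ := norm_add_le _ _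
                _ = ‖aseq n p - 1‖ + 1 := by norm_num
              linarith
            exact mul_le_mul b2 b1 (norm_nonneg _) (by norm_num)
          · have b1 : ‖aseq n p‖ ≤ 1/((n:ℝ)+1) := haNW n p ⟨hp, hpW⟩
            have b2 : ‖aseq n p - 1‖ ≤ 2 := by
              have : ‖aseq n p - 1‖ ≤ ‖aseq n p‖ + 1 := by
                calc ‖aseq n p - 1‖ ≤ ‖aseq n p‖ + ‖(1:ℂ)‖ := norm_sub_le _ _
                _ = ‖aseq n p‖ + 1 := by norm_num
              linarith
            have := mul_le_mul b1 b2 (norm_nonneg _) (by positivity : (0:ℝ) ≤ 1/((n:ℝ)+1))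
            linarith
        refine hMfree ⟨{z}, Set.singleton_subset_iff.mpr hzM, Set.singleton_nonempty z,
          hNne, isClosed_singleton, hNcl, ?_⟩
        intro ε hε
        have h1 : ∀ᶠ n in Filter.atTop, dist (b n z) 1 ≤ ε :=
          htendz.eventually (Metric.closedBall_mem_nhds 1 hε)
        have h2 : ∀ᶠ n : ℕ in Filter.atTop, ‖cinv‖ * (2 * (1/((n:ℝ)+1))) < ε := by
          have h0 : Filter.Tendsto (fun n : ℕ => ‖cinv‖ * (2 * (1/((n:ℝ)+1))))
              Filter.atTop (nhds 0) := by
            have ha := tendsto_one_div_add_atTop_nhds_zero_nat (𝕜 := ℝ)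
            have := ha.const_mul (‖cinv‖ * 2)
            simpa [mul_assoc] using this
          exact h0.eventually (gt_mem_nhds hε)
        obtain ⟨n, hn1, hn2⟩ := (h1.and h2).exists
        refine ⟨b n, hbA n, ?_, ?_⟩
        · intro w hw
          rw [Set.mem_singleton_iff] at hw
          subst hw
          rw [← dist_eq_norm]
          exact hn1
        · intro w hw
          exact le_trans (hbN n w hw) hn2.le
  have : M ⊆ N := hMmin.2 hNmem Set.diff_subset
  exact (this hzM).2 rfl

/-- Clopen sets whose characteristic function belongs to `A`. -/
def Echi (A : Subalgebra ℂ C(X, ℂ)) : Set (Set X) :=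
  {H | IsClopen H ∧ ∃ g ∈ A, ∀ w, g w = if w ∈ H then (1:ℂ) else 0}

lemma Echi_univ (A : Subalgebra ℂ C(X, ℂ)) : Set.univ ∈ Echi A := by
  refine ⟨isClopen_univ, 1, one_mem A, ?_⟩
  intro w; simp

lemma Echi_inter (A : Subalgebra ℂ C(X, ℂ)) {H₁ H₂ : Set X} (h1 : H₁ ∈ Echi A)
    (h2 : H₂ ∈ Echi A) : H₁ ∩ H₂ ∈ Echi A := by
  obtain ⟨hc1, g1, hg1, hv1⟩ := h1
  obtain ⟨hc2, g2, hg2, hv2⟩ := h2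
  refine ⟨hc1.inter hc2, g1 * g2, A.mul_mem hg1 hg2, ?_⟩
  intro w
  rw [ContinuousMap.mul_apply, hv1 w, hv2 w]
  by_cases hw1 : w ∈ H₁ <;> by_cases hw2 : w ∈ H₂ <;> simp [hw1, hw2]

lemma Echi_diff (A : Subalgebra ℂ C(X, ℂ)) {H₀ G : Set X} (h0 : H₀ ∈ Echi A)
    (hG : G ∈ Echi A) (hsub : G ⊆ H₀) : H₀ \ G ∈ Echi A := by
  obtain ⟨hc0, g0, hg0, hv0⟩ := h0
  obtain ⟨hcG, gG, hgG, hvG⟩ := hG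
  refine ⟨⟨hc0.1.sdiff hcG.2, hc0.2.sdiff hcG.1⟩, g0 - gG, A.sub_mem hg0 hgG, ?_⟩
  intro w
  rw [ContinuousMap.sub_apply, hv0 w, hvG w]
  by_cases hw0 : w ∈ H₀
  · by_cases hwG : w ∈ G
    · simp [hw0, hwG, Set.mem_diff]
    · simp [hw0, hwG, Set.mem_diff]
  · have hwG : w ∉ G := fun h => hw0 (hsub h)
    simp [hw0, hwG, Set.mem_diff]

/-- The intersection of all `A`-idempotent clopen sets containing `x` is `IdemFree`. -/
lemma class_idemFree (A : Subalgebra ℂ C(X, ℂ)) (hAcl : IsClosed (A : Set C(X, ℂ))) (x : X) :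
    IdemFree A (⋂₀ {H | H ∈ Echi A ∧ x ∈ H}) := by
  set F := {H | H ∈ Echi A ∧ x ∈ H} with hF
  set T := ⋂₀ F with hT
  have hFne : F.Nonempty := ⟨Set.univ, Echi_univ A, trivial⟩
  have hxT : x ∈ T := fun H hH => hH.2
  rintro ⟨W, hWT, hWne, hTWne, hWcl, hTWcl, happ⟩
  obtain ⟨a, ha, haW, haTW⟩ := happ (1/5) (by norm_num)
  have hnorm1 : ∀ z : ℂ, 1 ≤ ‖z‖ + ‖z - 1‖ := by
    intro z
    have h2 : ‖z - (z-1)‖ ≤ ‖z‖ + ‖z - 1‖ := norm_sub_le _ _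
    have h3 : ‖z - (z-1)‖ = 1 := by norm_num
    linarith
  set U := {w : X | ‖a w‖ < 1/4} ∪ {w : X | ‖a w - 1‖ < 1/4} with hU
  have hUopen : IsOpen U :=
    (isOpen_lt a.continuous.norm continuous_const).union
      (isOpen_lt (a - 1).continuous.norm continuous_const)
  have hTU : T ⊆ U := by
    intro w hw
    by_cases hwW : w ∈ W
    · exact Or.inr (by simpa using lt_of_le_of_lt (haW w hwW) (by norm_num))
    · exact Or.inl (by simpa using lt_of_le_of_lt (haTW w ⟨hw, hwW⟩) (by norm_num))
  -- find H₀ ∈ F with H₀ ⊆ U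
  have hH0 : ∃ H₀ ∈ F, H₀ ⊆ U := by
    by_contra hcon
    push_neg at hcon
    haveI : Nonempty ↥F := hFne.to_subtype
    have hnonempty : ∀ i : ↥F, ((i : Set X) \ U).Nonempty := fun i =>
      Set.not_subset.mp (hcon i i.2)
    have hdir : Directed (· ⊇ ·) (fun i : ↥F => (i : Set X) \ U) := by
      intro i j
      refine ⟨⟨(i : Set X) ∩ (j : Set X), ⟨Echi_inter A i.2.1 j.2.1, i.2.2, j.2.2⟩⟩, ?_, ?_⟩
      · exact Set.diff_subset_diff_left Set.inter_subset_left
      · exact Set.diff_subset_diff_left Set.inter_subset_right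
    have hclosed : ∀ i : ↥F, IsClosed ((i : Set X) \ U) := by
      intro i
      rw [Set.diff_eq]
      exact (i.2.1.1.1).inter hUopen.isClosed_compl
    obtain ⟨w, hw⟩ := IsCompact.nonempty_iInter_of_directed_nonempty_isCompact_isClosed
      (fun i : ↥F => (i : Set X) \ U) hdir hnonempty
      (fun i => (hclosed i).isCompact) hclosed
    simp only [Set.mem_iInter] at hw
    have hwT : w ∈ T := fun H hH => (hw ⟨H, hH⟩).1
    exact (hw ⟨hFne.some, hFne.some_mem⟩).2 (hTU hwT)
  obtain ⟨H₀, hH₀F, hH₀U⟩ := hH0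
  set G := H₀ ∩ {w : X | ‖a w - 1‖ < 1/4} with hG
  have hGeq : G = H₀ ∩ {w : X | 1/4 ≤ ‖a w‖} := by
    ext w
    constructor
    · rintro ⟨hw0, hw1⟩
      refine ⟨hw0, ?_⟩
      have := hnorm1 (a w)
      simp only [Set.mem_setOf_eq] at hw1 ⊢
      linarith
    · rintro ⟨hw0, hw1⟩
      refine ⟨hw0, ?_⟩
      simp only [Set.mem_setOf_eq] at hw1 ⊢
      rcases hH₀U hw0 with h | h
      · simp only [Set.mem_setOf_eq] at h
        linarith
      · exact h
  have hGclopen : IsClopen G := by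
    constructor
    · rw [hGeq]
      exact hH₀F.1.1.1.inter (isClosed_le continuous_const a.continuous.norm)
    · exact hH₀F.1.1.2.inter (isOpen_lt (a - 1).continuous.norm continuous_const)
  -- characteristic function of H₀ is in A
  have hchiH₀ : chiC H₀ hH₀F.1.1 ∈ A := by
    obtain ⟨-, g, hg, hv⟩ := hH₀F.1
    have : chiC H₀ hH₀F.1.1 = g := by
      ext w
      rw [hv w]
      rfl
    rw [this]
    exact hg
  -- the sequence χ_{H₀} · QC^[n] a converges to χ_G
  set sq : ℕ → C(X, ℂ) := fun n => chiC H₀ hH₀F.1.1 * QC^[n] a with hsq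
  have hsqA : ∀ n, sq n ∈ A := fun n => A.mul_mem hchiH₀ (QC_iter_mem A ha n)
  have hdistb : ∀ n, dist (sq n) (chiC G hGclopen) ≤ (7/8)^n * (1/4) := by
    intro n
    rw [ContinuousMap.dist_le (by positivity)]
    intro w
    rw [dist_eq_norm]
    have hsqw : sq n w = (if w ∈ H₀ then (1:ℂ) else 0) * qq^[n] (a w) := by
      simp only [hsq, ContinuousMap.mul_apply, QC_iter_apply]
      rfl
    by_cases hw0 : w ∈ H₀
    · by_cases hwG : w ∈ G
      · have hwlt : ‖a w - 1‖ < 1/4 := hwG.2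
        have : sq n w - chiC G hGclopen w = qq^[n] (a w) - 1 := by
          rw [hsqw, if_pos hw0]
          have : chiC G hGclopen w = 1 := by
            simp only [chiC, ContinuousMap.coe_mk, if_pos hwG]
          rw [this]; ring
        rw [this]
        calc ‖qq^[n] (a w) - 1‖ ≤ (7/8)^n * ‖a w - 1‖ := qq_iter_est (Or.inr rfl) n hwlt.le
        _ ≤ (7/8)^n * (1/4) := mul_le_mul_of_nonneg_left hwlt.le (by positivity)
      · have hwlt : ‖a w‖ < 1/4 := by
          rcases hH₀U hw0 with h | h
          · exact h
          · exact absurd ⟨hw0, h⟩ hwG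
        have : sq n w - chiC G hGclopen w = qq^[n] (a w) := by
          rw [hsqw, if_pos hw0]
          have : chiC G hGclopen w = 0 := by
            simp only [chiC, ContinuousMap.coe_mk, if_neg hwG]
          rw [this]; ring
        rw [this]
        have h0 := qq_iter_est (Or.inl rfl) n (z := a w) (by simpa using hwlt.le)
        simp only [sub_zero] at h0
        calc ‖qq^[n] (a w)‖ ≤ (7/8)^n * ‖a w‖ := h0
        _ ≤ (7/8)^n * (1/4) := mul_le_mul_of_nonneg_left hwlt.le (by positivity)
    · have hwG : w ∉ G := fun h => hw0 h.1
      have : sq n w - chiC G hGclopen w = 0 := by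
        rw [hsqw, if_neg hw0]
        have : chiC G hGclopen w = 0 := by
          simp only [chiC, ContinuousMap.coe_mk, if_neg hwG]
        rw [this]; ring
      rw [this]
      simp only [norm_zero]
      positivity
  have htendsq : Filter.Tendsto sq Filter.atTop (nhds (chiC G hGclopen)) := by
    rw [tendsto_iff_dist_tendsto_zero]
    refine squeeze_zero (fun n => dist_nonneg) hdistb ?_
    have := (tendsto_pow_atTop_nhds_zero_of_lt_one (by norm_num : (0:ℝ) ≤ 7/8)
      (by norm_num : (7/8:ℝ) < 1)).mul_const (1/4 : ℝ)
    simpa using this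
  have hchiG : chiC G hGclopen ∈ A :=
    hAcl.mem_of_tendsto htendsq (Filter.Eventually.of_forall hsqA)
  have hGE : G ∈ Echi A := ⟨hGclopen, chiC G hGclopen, hchiG, fun w => rfl⟩
  have hxH₀ : x ∈ H₀ := hH₀F.2
  by_cases hxG : x ∈ G
  · -- T ⊆ G, contradiction with T \ W nonempty
    have hTG : T ⊆ G := Set.sInter_subset_of_mem (⟨hGE, hxG⟩ : G ∈ F)
    obtain ⟨w, hw⟩ := hTWne
    have hw1 : ‖a w - 1‖ < 1/4 := (hTG hw.1).2
    have hw0 : ‖a w‖ ≤ 1/5 := haTW w hw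
    linarith [hnorm1 (a w)]
  · -- T ⊆ H₀ \ G, contradiction with W nonempty
    have hH₁E : H₀ \ G ∈ Echi A := Echi_diff A hH₀F.1 hGE Set.inter_subset_left
    have hxH₁ : x ∈ H₀ \ G := ⟨hxH₀, hxG⟩
    have hTH₁ : T ⊆ H₀ \ G := Set.sInter_subset_of_mem (⟨hH₁E, hxH₁⟩ : H₀ \ G ∈ F)
    obtain ⟨w, hw⟩ := hWne
    have hwT : w ∈ T := hWT hw
    have hw1 : ‖a w - 1‖ ≤ 1/5 := haW w hw
    have : w ∈ G := ⟨(hTH₁ hwT).1, by simp only [Set.mem_setOf_eq]; linarith⟩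
    exact (hTH₁ hwT).2 this

end Machine

end KunenAux

set_option maxHeartbeats 1000000 in
/-- If `X` is compact Hausdorff and every (nonempty) perfect subset of `X` has the NTIP,
then `X` has the CSWP. -/
theorem stmt12 {X : Type*} [TopologicalSpace X] [CompactSpace X] [T2Space X]
    (h : ∀ P : Set X, Perfect P → P.Nonempty → NTIP P) : CSWP X := by

  intro A₀ hA₀sep
  set A := A₀.topologicalClosure with hA
  have hAcl : IsClosed (A : Set C(X, ℂ)) := A₀.isClosed_topologicalClosure
  have hAsep : ∀ x y : X, x ≠ y → ∃ f ∈ A, f x ≠ f y := by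
    intro x y hxy
    obtain ⟨f', ⟨f, hf, rfl⟩, hne⟩ := hA₀sep hxy
    exact ⟨f, A₀.le_topologicalClosure hf, hne⟩
  -- the idempotents in A separate points
  have hEsep : ∀ x y : X, x ≠ y → ∃ H ∈ Echi A, x ∈ H ∧ y ∉ H := by
    intro x y hxy
    by_contra hcon
    push_neg at hcon
    set F := {H | H ∈ Echi A ∧ x ∈ H} with hF
    set T := ⋂₀ F with hT
    have hTcl : IsClosed T := isClosed_sInter (fun H hH => hH.1.1.1)
    have hxT : x ∈ T := fun H hH => hH.2
    have hyT : y ∈ T := by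
      intro H hH
      exact hcon H hH.1 hH.2
    exact machine A hAsep h hTcl hxT hyT hxy (class_idemFree A hAcl x)
  -- Stone–Weierstrass via the star subalgebra generated by idempotents
  set SSet : Set C(X, ℂ) := {f | f ∈ A ∧ ∀ w, f w = 0 ∨ f w = 1} with hSSet
  have hself : ∀ f ∈ SSet, star f = f := by
    intro f hf
    ext w
    rw [ContinuousMap.star_apply]
    rcases hf.2 w with h | h <;> rw [h] <;> simp
  have hSSetA : SSet ∪ star SSet ⊆ (A : Set C(X, ℂ)) := by
    rintro f (hf | hf)
    · exact hf.1
    · rw [Set.mem_star] at hf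
      have h2 : f = star f := by
        conv_lhs => rw [← star_star f]
        rw [hself _ hf]
      rw [h2]
      exact hf.1
  set SA : StarSubalgebra ℂ C(X, ℂ) := StarAlgebra.adjoin ℂ SSet with hSA
  have hSAle : (SA : Set C(X, ℂ)) ⊆ (A : Set C(X, ℂ)) := by
    have hle : SA.toSubalgebra ≤ A := by
      rw [hSA, StarAlgebra.adjoin_toSubalgebra]
      exact Algebra.adjoin_le hSSetA
    intro f hf
    exact hle hf
  have hSAsep : SA.SeparatesPoints := by
    intro x y hxy
    obtain ⟨H, hHE, hxH, hyH⟩ := hEsep x y hxy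
    obtain ⟨hHclopen, g, hgA, hgv⟩ := hHE
    have hgS : g ∈ SSet := by
      refine ⟨hgA, fun w => ?_⟩
      rw [hgv w]
      by_cases hw : w ∈ H <;> simp [hw]
    refine ⟨g, ⟨g, StarAlgebra.subset_adjoin ℂ SSet hgS, rfl⟩, ?_⟩
    rw [hgv x, hgv y, if_pos hxH, if_neg hyH]
    exact one_ne_zero
  have htop := ContinuousMap.starSubalgebra_topologicalClosure_eq_top_of_separatesPoints SA hSAsep
  rw [dense_iff_closure_eq]
  have h1 : closure (SA : Set C(X, ℂ)) = Set.univ := by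
    rw [← StarSubalgebra.topologicalClosure_coe, htop, StarSubalgebra.coe_top]
  have h3 : closure (A : Set C(X, ℂ)) = (A : Set C(X, ℂ)) := hAcl.closure_eq
  have h4 : (A : Set C(X, ℂ)) = closure (A₀ : Set C(X, ℂ)) := A₀.topologicalClosure_coe
  apply Set.eq_univ_of_univ_subset
  calc Set.univ = closure (SA : Set C(X, ℂ)) := h1.symm
  _ ⊆ closure (A : Set C(X, ℂ)) := closure_mono hSAle
  _ = (A : Set C(X, ℂ)) := h3
  _ = closure (A₀ : Set C(X, ℂ)) := h4
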